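/- Suppose f satisfies the linear group property on G, and A is a linear map on n×n real matrices such that f(exp(v)) − A(v) = o(‖v‖) as v → 0 with v ranging in 𝔤 (i.e., A is the differential at 0 of v ↦ exp(v)⁻¹·f(exp(v)) along 𝔤). Then for all x, y ∈ 𝔤 one has A([x,y]) = [A(x), y] + [x, A(y)], i.e., A acts as a derivation of the matrix commutator on 𝔤. (Lemma 1.) -/

import Mathlib

open NormedSpace

attribute [local instance] Matrix.normedAddCommGroup Matrix.normedSpace

/-- `f` satisfies the linear group property on `G`:
`f (X*Y) = f X * Y + X * f Y` for all `X, Y ∈ G`. -/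
def LinearGroupProp {n : ℕ} (G : Set (Matrix (Fin n) (Fin n) ℝ))
    (f : Matrix (Fin n) (Fin n) ℝ → Matrix (Fin n) (Fin n) ℝ) : Prop :=
  ∀ X ∈ G, ∀ Y ∈ G, f (X * Y) = f X * Y + X * f Y

/-- `f` satisfies the affine group property on `G`:
`f (X*Y) = f X * Y + X * f Y - X * f 1 * Y` for all `X, Y ∈ G`. -/
def AffineGroupProp {n : ℕ} (G : Set (Matrix (Fin n) (Fin n) ℝ))
    (f : Matrix (Fin n) (Fin n) ℝ → Matrix (Fin n) (Fin n) ℝ) : Prop :=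
  ∀ X ∈ G, ∀ Y ∈ G, f (X * Y) = f X * Y + X * f Y - X * f 1 * Y

/-- `G` is a matrix Lie group: a closed subgroup of the group of invertible `n × n`
real matrices. -/
structure IsMatrixLieGroup {n : ℕ} (G : Set (Matrix (Fin n) (Fin n) ℝ)) : Prop where
  one_mem : (1 : Matrix (Fin n) (Fin n) ℝ) ∈ G
  mul_mem : ∀ {X Y : Matrix (Fin n) (Fin n) ℝ}, X ∈ G → Y ∈ G → X * Y ∈ G
  isUnit : ∀ {X : Matrix (Fin n) (Fin n) ℝ}, X ∈ G → IsUnit X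
  inv_mem : ∀ {X : Matrix (Fin n) (Fin n) ℝ}, X ∈ G → X⁻¹ ∈ G
  closed : IsClosed {A : {M : Matrix (Fin n) (Fin n) ℝ // IsUnit M} |
    (A : Matrix (Fin n) (Fin n) ℝ) ∈ G}

/-- The Lie algebra of the matrix Lie group `G`. -/
def lieAlgebraOf {n : ℕ} (G : Set (Matrix (Fin n) (Fin n) ℝ)) :
    Set (Matrix (Fin n) (Fin n) ℝ) :=
  {x | ∀ t : ℝ, exp (t • x) ∈ G}

open Filter

section linftyAux
attribute [-instance] Matrix.normedAddCommGroup Matrix.normedSpace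
attribute [local instance] Matrix.linftyOpNormedAddCommGroup Matrix.linftyOpNormedRing
  Matrix.linftyOpNormedAlgebra

lemma exp_entry_deriv_aux {n : ℕ} (x : Matrix (Fin n) (Fin n) ℝ) (i j : Fin n) :
    Tendsto (fun t : ℝ => (t⁻¹ • (exp (t • x) - 1)) i j) (nhdsWithin 0 {(0:ℝ)}ᶜ)
      (nhds (x i j)) := by
  have h := hasDerivAt_exp_smul_const (𝕂 := ℝ) x 0
  rw [hasDerivAt_iff_tendsto_slope] at h
  simp only [zero_smul, exp_zero, one_mul] at h
  have h2 : Tendsto (fun t : ℝ => slope (fun t : ℝ => exp (t • x)) 0 t i j)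
      (nhdsWithin 0 {(0:ℝ)}ᶜ) (nhds (x i j)) := by
    have hc : Continuous (fun M : Matrix (Fin n) (Fin n) ℝ => M i j) :=
      (continuous_apply j).comp (continuous_apply i)
    exact (hc.tendsto _).comp h
  refine h2.congr (fun t => ?_)
  simp [slope, vsub_eq_sub]
end linftyAux


lemma tendsto_exp_deriv {n : ℕ} (x : Matrix (Fin n) (Fin n) ℝ) :
    Tendsto (fun t : ℝ => t⁻¹ • (exp (t • x) - 1)) (nhdsWithin 0 {(0:ℝ)}ᶜ)
      (nhds x) := by
  refine tendsto_pi_nhds.mpr fun i => tendsto_pi_nhds.mpr fun j => ?_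
  exact exp_entry_deriv_aux x i j

/-- **Lemma 1.** If `f` satisfies the linear group property on `G` and `A` is the
differential at `0` of `v ↦ exp(v)⁻¹ * f (exp v)` along the Lie algebra `𝔤` of `G`
(i.e. `f (exp v) - A v = o(‖v‖)` as `v → 0` in `𝔤`), then `A` is a derivation of the
matrix commutator on `𝔤`: `A [x,y] = [A x, y] + [x, A y]` for all `x, y ∈ 𝔤`. -/
theorem differential_is_derivation {n : ℕ} (hn : 0 < n)
    (G : Set (Matrix (Fin n) (Fin n) ℝ)) (hG : IsMatrixLieGroup G)
    (f : Matrix (Fin n) (Fin n) ℝ → Matrix (Fin n) (Fin n) ℝ)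
    (hf : LinearGroupProp G f)
    (A : Matrix (Fin n) (Fin n) ℝ →ₗ[ℝ] Matrix (Fin n) (Fin n) ℝ)
    (hA : (fun v => f (exp v) - A v)
      =o[nhdsWithin (0 : Matrix (Fin n) (Fin n) ℝ) (lieAlgebraOf G)] (fun v => v)) :
    ∀ x ∈ lieAlgebraOf G, ∀ y ∈ lieAlgebraOf G,
      A (x * y - y * x) = (A x * y - y * A x) + (x * A y - A y * x) := by
  intro x hx y hy
  set l := nhdsWithin 0 {(0:ℝ)}ᶜ with hl
  -- f 1 = 0
  have hf1 : f 1 = 0 := by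
    have h := hf 1 hG.one_mem 1 hG.one_mem
    rw [mul_one, one_mul, mul_one] at h
    have h2 : f 1 + f 1 = f 1 + 0 := by rw [add_zero]; exact h.symm
    exact (add_left_cancel h2)
  -- f g⁻¹
  have hfinv : ∀ g ∈ G, f g⁻¹ = -(g⁻¹ * (f g * g⁻¹)) := by
    intro g hg
    have hu := hG.isUnit hg
    have hdet : IsUnit g.det := (Matrix.isUnit_iff_isUnit_det g).mp hu
    have h := hf g hg g⁻¹ (hG.inv_mem hg)
    rw [Matrix.mul_nonsing_inv g hdet, hf1] at h
    have h2 : g * f g⁻¹ = -(f g * g⁻¹) := eq_neg_of_add_eq_zero_right h.symm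
    calc f g⁻¹ = g⁻¹ * g * f g⁻¹ := by rw [Matrix.nonsing_inv_mul g hdet, one_mul]
    _ = g⁻¹ * (g * f g⁻¹) := by rw [mul_assoc]
    _ = -(g⁻¹ * (f g * g⁻¹)) := by rw [h2, mul_neg]
  -- L1 : derivative of f ∘ exp along lines
  have l1 : ∀ w ∈ lieAlgebraOf G,
      Tendsto (fun s : ℝ => s⁻¹ • f (exp (s • w))) l (nhds (A w)) := by
    intro w hw
    have hsm : ∀ c : ℝ, c • w ∈ lieAlgebraOf G := by
      intro c t
      rw [smul_smul]
      exact hw (t * c)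
    have hc : Tendsto (fun s : ℝ => s • w) l (nhdsWithin 0 (lieAlgebraOf G)) := by
      apply tendsto_nhdsWithin_of_tendsto_nhds_of_eventually_within
      · have h0 : Tendsto (fun s : ℝ => s • w) (nhds 0) (nhds ((0:ℝ) • w)) :=
          (tendsto_id.smul_const w)
        simpa using h0.mono_left nhdsWithin_le_nhds
      · exact Eventually.of_forall hsm
    have h1 : (fun s : ℝ => f (exp (s • w)) - A (s • w)) =o[l] (fun s => s • w) :=
      hA.comp_tendsto hc
    have h2 : (fun s : ℝ => s • w) =O[l] (fun s : ℝ => s) := by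
      refine Asymptotics.isBigO_iff.mpr ⟨‖w‖, Eventually.of_forall fun s => ?_⟩
      rw [norm_smul]
      exact le_of_eq (mul_comm _ _)
    have h3 := (h1.trans_isBigO h2).tendsto_inv_smul_nhds_zero
    have h4 : Tendsto (fun s : ℝ => s⁻¹ • f (exp (s • w)) - A w) l (nhds 0) := by
      refine h3.congr' ?_
      filter_upwards [self_mem_nhdsWithin] with s hs
      have hs' : s ≠ 0 := hs
      rw [map_smul, smul_sub, smul_smul, inv_mul_cancel₀ hs', one_smul]
    exact tendsto_sub_nhds_zero_iff.mp h4
  -- key conjugation identity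
  have key : ∀ g ∈ G, ∀ z ∈ lieAlgebraOf G,
      A (g * z * g⁻¹) = f g * z * g⁻¹ + g * A z * g⁻¹ - g * z * (g⁻¹ * (f g * g⁻¹)) := by
    intro g hg z hz
    have hu := hG.isUnit hg
    have hdet : IsUnit g.det := (Matrix.isUnit_iff_isUnit_det g).mp hu
    have hgg : g * g⁻¹ = 1 := Matrix.mul_nonsing_inv g hdet
    have hconj : ∀ s : ℝ, exp (s • (g * z * g⁻¹)) = g * exp (s • z) * g⁻¹ := by
      intro s
      have hs : s • (g * z * g⁻¹) = g * (s • z) * g⁻¹ := by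
        rw [mul_smul_comm, smul_mul_assoc]
      rw [hs]
      exact Matrix.exp_conj g (s • z) hu
    have hAdmem : g * z * g⁻¹ ∈ lieAlgebraOf G := by
      intro s
      rw [hconj s]
      exact hG.mul_mem (hG.mul_mem hg (hz s)) (hG.inv_mem hg)
    have hid : ∀ s : ℝ, f (exp (s • (g * z * g⁻¹))) =
        f g * (exp (s • z) * g⁻¹) +
          g * (f (exp (s • z)) * g⁻¹ + exp (s • z) * -(g⁻¹ * (f g * g⁻¹))) := by
      intro s
      rw [hconj s, mul_assoc, hf g hg _ (hG.mul_mem (hz s) (hG.inv_mem hg)),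
        hf _ (hz s) _ (hG.inv_mem hg), hfinv g hg]
    have claim : ∀ s : ℝ, s⁻¹ • f (exp (s • (g * z * g⁻¹))) =
        f g * (s⁻¹ • (exp (s • z) - 1)) * g⁻¹ + g * (s⁻¹ • f (exp (s • z))) * g⁻¹
          - g * (s⁻¹ • (exp (s • z) - 1)) * (g⁻¹ * (f g * g⁻¹)) := by
      intro s
      rw [hid s]
      set E := exp (s • z)
      set F := f E
      have halg : f g * (E * g⁻¹) + g * (F * g⁻¹ + E * -(g⁻¹ * (f g * g⁻¹))) =
          f g * (E - 1) * g⁻¹ + g * F * g⁻¹ - g * (E - 1) * (g⁻¹ * (f g * g⁻¹)) := by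
        have hsub : (f g * (E * g⁻¹) + g * (F * g⁻¹ + E * -(g⁻¹ * (f g * g⁻¹)))) -
            (f g * (E - 1) * g⁻¹ + g * F * g⁻¹ - g * (E - 1) * (g⁻¹ * (f g * g⁻¹))) =
            f g * g⁻¹ - g * (g⁻¹ * (f g * g⁻¹)) := by noncomm_ring
        have hz2 : f g * g⁻¹ - g * (g⁻¹ * (f g * g⁻¹)) = 0 := by
          rw [← mul_assoc, ← mul_assoc, hgg, one_mul, sub_self]
        rw [← sub_eq_zero, hsub, hz2]
      rw [halg]
      simp only [mul_smul_comm, smul_mul_assoc]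
      rw [smul_sub, smul_add]
    have hD := tendsto_exp_deriv z
    have hQ := l1 z hz
    have lim2 : Tendsto (fun s : ℝ => s⁻¹ • f (exp (s • (g * z * g⁻¹)))) l
        (nhds (f g * z * g⁻¹ + g * A z * g⁻¹ - g * z * (g⁻¹ * (f g * g⁻¹)))) := by
      refine Tendsto.congr (fun s => (claim s).symm) ?_
      exact ((((tendsto_const_nhds (x := f g)).mul hD).mul (tendsto_const_nhds (x := g⁻¹))).add
          (((tendsto_const_nhds (x := g)).mul hQ).mul (tendsto_const_nhds (x := g⁻¹)))).sub
          (((tendsto_const_nhds (x := g)).mul hD).mul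
            (tendsto_const_nhds (x := g⁻¹ * (f g * g⁻¹))))
    exact tendsto_nhds_unique (l1 _ hAdmem) lim2
  -- Final step
  have hEinv : ∀ t : ℝ, exp ((-t) • x) = (exp (t • x))⁻¹ := by
    intro t
    rw [neg_smul, Matrix.exp_neg]
  have hID : ∀ t : ℝ, A (exp (t • x) * y * exp ((-t) • x)) =
      f (exp (t • x)) * y * exp ((-t) • x) +
        exp (t • x) * A y * exp ((-t) • x) -
        exp (t • x) * y * (exp ((-t) • x) * (f (exp (t • x)) * exp ((-t) • x))) := by
    intro t
    rw [hEinv t]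
    exact key _ (hx t) y hy
  have hneg : Tendsto (fun t : ℝ => -t) l l := by
    apply tendsto_nhdsWithin_of_tendsto_nhds_of_eventually_within
    · have : Tendsto (fun t : ℝ => -t) (nhds 0) (nhds (-(0:ℝ))) := tendsto_neg ..
      simpa using this.mono_left nhdsWithin_le_nhds
    · filter_upwards [self_mem_nhdsWithin] with t ht
      simp only [Set.mem_compl_iff, Set.mem_singleton_iff] at ht ⊢
      exact neg_ne_zero.mpr ht
  have hDx := tendsto_exp_deriv x
  have hDneg : Tendsto (fun t : ℝ => t⁻¹ • (exp ((-t) • x) - 1)) l (nhds (-x)) := by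
    have h := (tendsto_exp_deriv x).neg.comp hneg
    refine h.congr fun t => ?_
    show -((-t)⁻¹ • (exp ((-t) • x) - 1)) = _
    rw [inv_neg, neg_smul, neg_neg]
  have htz : Tendsto (fun t : ℝ => t) l (nhds 0) := tendsto_id.mono_left nhdsWithin_le_nhds
  have hE1 : Tendsto (fun t : ℝ => exp (t • x)) l (nhds 1) := by
    have h := (htz.smul hDx).add_const (1 : Matrix (Fin n) (Fin n) ℝ)
    rw [zero_smul, zero_add] at h
    refine h.congr' ?_
    filter_upwards [self_mem_nhdsWithin] with t ht
    have ht' : (t:ℝ) ≠ 0 := ht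
    rw [smul_inv_smul₀ ht', sub_add_cancel]
  have hEinv1 : Tendsto (fun t : ℝ => exp ((-t) • x)) l (nhds 1) := by
    have h := (htz.smul hDneg).add_const (1 : Matrix (Fin n) (Fin n) ℝ)
    rw [zero_smul, zero_add] at h
    refine h.congr' ?_
    filter_upwards [self_mem_nhdsWithin] with t ht
    have ht' : (t:ℝ) ≠ 0 := ht
    rw [smul_inv_smul₀ ht', sub_add_cancel]
  have hQ := l1 x hx
  -- u t
  set u : ℝ → Matrix (Fin n) (Fin n) ℝ :=
    fun t => t⁻¹ • (A (exp (t • x) * y * exp ((-t) • x)) - A y) with hu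
  -- decomposition lemma
  have hdec : ∀ (t : ℝ) (a : Matrix (Fin n) (Fin n) ℝ),
      t⁻¹ • (exp (t • x) * a * exp ((-t) • x) - a) =
        (t⁻¹ • (exp (t • x) - 1)) * a * exp ((-t) • x) +
          a * (t⁻¹ • (exp ((-t) • x) - 1)) := by
    intro t a
    simp only [smul_mul_assoc, mul_smul_comm, ← smul_add]
    congr 1
    noncomm_ring
  have lhs_lim : Tendsto u l (nhds (A (x * y - y * x))) := by
    have hinner : Tendsto (fun t : ℝ =>
        (t⁻¹ • (exp (t • x) - 1)) * y * exp ((-t) • x) +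
          y * (t⁻¹ • (exp ((-t) • x) - 1))) l (nhds (x * y * 1 + y * (-x))) :=
      ((hDx.mul tendsto_const_nhds).mul hEinv1).add (tendsto_const_nhds.mul hDneg)
    have hA_cont := (A.continuous_of_finiteDimensional).tendsto (x * y * 1 + y * (-x))
    have hcomp := hA_cont.comp hinner
    have : A (x * y * 1 + y * (-x)) = A (x * y - y * x) := by
      congr 1
      noncomm_ring
    rw [this] at hcomp
    refine hcomp.congr fun t => ?_
    simp only [Function.comp_apply, hu]
    rw [← hdec t y, map_smul, map_sub]
  have hueq : ∀ t : ℝ, u t =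
      (t⁻¹ • f (exp (t • x))) * y * exp ((-t) • x) +
        ((t⁻¹ • (exp (t • x) - 1)) * A y * exp ((-t) • x) +
          A y * (t⁻¹ • (exp ((-t) • x) - 1))) -
        exp (t • x) * y * exp ((-t) • x) * ((t⁻¹ • f (exp (t • x))) * exp ((-t) • x)) := by
    intro t
    show t⁻¹ • (A (exp (t • x) * y * exp ((-t) • x)) - A y) = _
    rw [hID t, ← hdec t (A y)]
    simp only [smul_mul_assoc, mul_smul_comm, ← smul_sub, ← smul_add]
    congr 1
    noncomm_ring
  have rhs_lim : Tendsto u l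
      (nhds (A x * y * 1 + (x * A y * 1 + A y * (-x)) - 1 * y * 1 * (A x * 1))) := by
    have h1 := (((hQ.mul (tendsto_const_nhds (x := y))).mul hEinv1).add
        (((hDx.mul (tendsto_const_nhds (x := A y))).mul hEinv1).add
          ((tendsto_const_nhds (x := A y)).mul hDneg))).sub
        (((hE1.mul (tendsto_const_nhds (x := y))).mul hEinv1).mul (hQ.mul hEinv1))
    exact h1.congr fun t => (hueq t).symm
  have huniq := tendsto_nhds_unique lhs_lim rhs_lim
  rw [huniq]
  noncomm_ring
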